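/- Let a₁⁺, a₂⁺, a₁⁻, a₂⁻ ≥ 0, σ² ≥ 0, μ ∈ ℝ, and let G⁺, G⁻ be (nonnegative Borel) measures on (0,∞) satisfying ∫ (1+t)^{−1} dG^±(t) < ∞, whose supports are contained in [m₊, ∞) and [m₋, ∞) respectively, with m₊, m₋ > 0. Then the function ψ(ξ) = (a₂⁺ ξ² − i a₁⁺ ξ) · ST(G⁺)(−iξ) + (a₂⁻ ξ² + i a₁⁻ ξ) · ST(G⁻)(iξ) + (σ²/2) ξ² − iμξ is well defined and analytic (complex-differentiable) on the open set ℂ ∖ ( i(−∞, −m₊] ∪ i[m₋, +∞) ), i.e., the characteristic exponent of a Stieltjes–Lévy process admits analytic continuation to the complex plane with two cuts along the imaginary axis. -/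

import Mathlib

open MeasureTheory Complex Set
open scoped ENNReal

/-- The Stieltjes transform `ST(G)(z) = ∫ (t + z)⁻¹ dG(t)` of a measure `G` on `(0,∞)`
(realized as a Borel measure on `ℝ`). -/
noncomputable def stieltjesTransform (G : Measure ℝ) (z : ℂ) : ℂ :=
  ∫ t : ℝ, ((t : ℂ) + z)⁻¹ ∂G

/-- The characteristic exponent of a Stieltjes–Lévy process:
`ψ(ξ) = (a₂⁺ξ² - ia₁⁺ξ)·ST(G⁺)(-iξ) + (a₂⁻ξ² + ia₁⁻ξ)·ST(G⁻)(iξ) + (σ²/2)ξ² - iμξ`. -/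
noncomputable def slPsi (a1p a2p a1m a2m sig2 μ : ℝ) (Gp Gm : Measure ℝ) (ξ : ℂ) : ℂ :=
  ((a2p : ℂ) * ξ ^ 2 - Complex.I * (a1p : ℂ) * ξ) * stieltjesTransform Gp (-Complex.I * ξ) +
    ((a2m : ℂ) * ξ ^ 2 + Complex.I * (a1m : ℂ) * ξ) * stieltjesTransform Gm (Complex.I * ξ) +
    ((sig2 / 2 : ℝ) : ℂ) * ξ ^ 2 - Complex.I * (μ : ℂ) * ξ

/-- Uniform lower bound `c·(1+t) ≤ ‖t + w‖` for `t ≥ m` and `w` near a point `z`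
off the cut `(-∞, -m]`. -/
lemma stieltjes_key (m : ℝ) (hm : 0 < m) (z : ℂ)
    (hz : z ∉ {w : ℂ | w.im = 0 ∧ w.re ≤ -m}) :
    ∃ ε > 0, ∃ c > 0, ∀ t : ℝ, m ≤ t → ∀ w ∈ Metric.ball z ε,
      c * (1 + t) ≤ ‖(t : ℂ) + w‖ := by
  set S : Set ℂ := {w : ℂ | w.im = 0 ∧ w.re ≤ -m} with hS
  have hSc : IsClosed S := by
    have : S = Complex.im ⁻¹' {0} ∩ Complex.re ⁻¹' (Set.Iic (-m)) := by
      ext w; simp [hS, Set.mem_setOf_eq]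
    rw [this]
    exact (isClosed_singleton.preimage Complex.continuous_im).inter
      (isClosed_Iic.preimage Complex.continuous_re)
  have hSne : S.Nonempty := ⟨((-m : ℝ) : ℂ), by simp [hS]⟩
  have hd : 0 < Metric.infDist z S :=
    (hSc.notMem_iff_infDist_pos hSne).mp hz
  set d := Metric.infDist z S with hdd
  set R : ℝ := ‖z‖ + d / 2 with hR
  set T : ℝ := max m (2 * R + 2) with hT
  have hT0 : 0 < 1 + T := by
    have : m ≤ T := le_max_left _ _
    linarith
  set c : ℝ := min (d / (2 * (1 + T))) (1 / 2) with hc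
  have hcpos : 0 < c := by
    apply lt_min
    · positivity
    · norm_num
  refine ⟨d / 2, by positivity, c, hcpos, ?_⟩
  intro t ht w hw
  have hwz : dist w z < d / 2 := Metric.mem_ball.mp hw
  have hlow : d / 2 ≤ ‖(t : ℂ) + w‖ := by
    have hmem : (-(t : ℂ)) ∈ S := by
      constructor
      · simp
      · simp; linarith
    have h1 : d ≤ dist z (-(t : ℂ)) := Metric.infDist_le_dist_of_mem hmem
    have h2 : dist w (-(t : ℂ)) = ‖(t : ℂ) + w‖ := by
      rw [dist_eq_norm]
      congr 1
      ring
    have h3 := dist_triangle z w (-(t : ℂ))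
    rw [dist_comm z w] at h3
    linarith [h2 ▸ h3]
  have hwabs : ‖w‖ ≤ R := by
    have : ‖w‖ ≤ ‖z‖ + ‖w - z‖ := by
      calc ‖w‖ = ‖z + (w - z)‖ := by ring_nf
        _ ≤ ‖z‖ + ‖w - z‖ := norm_add_le _ _
    have : ‖w - z‖ < d / 2 := by rwa [← dist_eq_norm]
    rw [hR]
    have h4 : ‖w‖ ≤ ‖z‖ + ‖w - z‖ := by
      calc ‖w‖ = ‖z + (w - z)‖ := by ring_nf
        _ ≤ ‖z‖ + ‖w - z‖ := norm_add_le _ _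
    linarith
  rcases le_or_gt t T with hle | hgt
  · have hc1 : c ≤ d / (2 * (1 + T)) := min_le_left _ _
    have h5 : c * (1 + t) ≤ (d / (2 * (1 + T))) * (1 + T) := by
      apply mul_le_mul hc1 (by linarith) (by linarith) (by positivity)
    have h6 : (d / (2 * (1 + T))) * (1 + T) = d / 2 := by
      field_simp
    linarith
  · have htR : 2 * R + 2 ≤ t := le_trans (le_max_right _ _) hgt.le
    have htri : ‖(t : ℂ)‖ ≤ ‖(t : ℂ) + w‖ + ‖w‖ := by
      calc ‖(t : ℂ)‖ = ‖((t : ℂ) + w) - w‖ := by ring_nf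
        _ ≤ ‖(t : ℂ) + w‖ + ‖w‖ := norm_sub_le _ _
    have habs_t : ‖(t : ℂ)‖ = t := by
      rw [Complex.norm_real, Real.norm_eq_abs]
      exact abs_of_pos (by linarith)
    have hc2 : c ≤ 1 / 2 := min_le_right _ _
    have hRnn : 0 ≤ R := by positivity
    nlinarith [norm_nonneg ((t : ℂ) + w)]

/-- Differentiability of the Stieltjes transform off the cut. -/
lemma stieltjesTransform_differentiableAt
    (G : Measure ℝ) (m : ℝ) (hm : 0 < m)
    (hsupp : G (Set.Iio m) = 0)
    (hInt : (∫⁻ t : ℝ, ENNReal.ofReal ((1 + t)⁻¹) ∂G) < ⊤)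
    (z : ℂ) (hz : z ∉ {w : ℂ | w.im = 0 ∧ w.re ≤ -m}) :
    DifferentiableAt ℂ (stieltjesTransform G) z := by
  obtain ⟨ε, hε, c, hcpos, key⟩ := stieltjes_key m hm z hz
  have hae : ∀ᵐ t ∂G, m ≤ t := by
    rw [ae_iff]
    convert hsupp using 2
    ext t
    simp [not_le]
  have hmeas : ∀ w : ℂ, AEStronglyMeasurable (fun t : ℝ => ((t : ℂ) + w)⁻¹) G := fun w =>
    ((Complex.measurable_ofReal.add measurable_const).inv).aestronglyMeasurable
  have hmeas' : AEStronglyMeasurable (fun t : ℝ => -(((t : ℂ) + z) ^ 2)⁻¹) G :=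
    (((Complex.measurable_ofReal.add measurable_const).pow measurable_const).inv.neg).aestronglyMeasurable
  have hbase : Integrable (fun t : ℝ => (1 + t)⁻¹) G := by
    refine ⟨(measurable_const.add measurable_id).inv.aestronglyMeasurable, ?_⟩
    rw [hasFiniteIntegral_iff_norm]
    have heq : (∫⁻ t, ENNReal.ofReal ‖(1 + t)⁻¹‖ ∂G) = ∫⁻ t, ENNReal.ofReal ((1 + t)⁻¹) ∂G := by
      apply lintegral_congr_ae
      filter_upwards [hae] with t ht
      rw [Real.norm_eq_abs, _root_.abs_of_nonneg (inv_nonneg.mpr (by linarith))]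
    rw [heq]
    exact hInt
  have hF_int : Integrable (fun t : ℝ => ((t : ℂ) + z)⁻¹) G := by
    refine (hbase.const_mul c⁻¹).mono' (hmeas z) ?_
    filter_upwards [hae] with t ht
    have hk := key t ht z (Metric.mem_ball_self hε)
    have h1 : (0:ℝ) < 1 + t := by linarith
    rw [norm_inv]
    calc ‖(t : ℂ) + z‖⁻¹ ≤ (c * (1 + t))⁻¹ := by
            apply inv_anti₀ (by positivity) hk
      _ = c⁻¹ * (1 + t)⁻¹ := by rw [mul_inv]
  have h_bound : ∀ᵐ t : ℝ ∂G, ∀ w ∈ Metric.ball z ε,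
      ‖-(((t : ℂ) + w) ^ 2)⁻¹‖ ≤ c⁻¹ ^ 2 * (1 + t)⁻¹ := by
    filter_upwards [hae] with t ht w hw
    have hk := key t ht w hw
    have h1 : (1:ℝ) ≤ 1 + t := by linarith
    rw [norm_neg, norm_inv, norm_pow]
    have h2 : c ^ 2 * (1 + t) ≤ ‖(t : ℂ) + w‖ ^ 2 := by
      nlinarith [mul_self_le_mul_self (by positivity : (0:ℝ) ≤ c * (1 + t)) hk, hcpos.le]
    calc (‖(t : ℂ) + w‖ ^ 2)⁻¹ ≤ (c ^ 2 * (1 + t))⁻¹ := by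
            apply inv_anti₀ (by positivity) h2
      _ = c⁻¹ ^ 2 * (1 + t)⁻¹ := by rw [mul_inv, inv_pow]
  have h_diff : ∀ᵐ t : ℝ ∂G, ∀ w ∈ Metric.ball z ε,
      HasDerivAt (fun w : ℂ => ((t : ℂ) + w)⁻¹) (-(((t : ℂ) + w) ^ 2)⁻¹) w := by
    filter_upwards [hae] with t ht w hw
    have hk := key t ht w hw
    have hne : (t : ℂ) + w ≠ 0 := by
      intro h0
      rw [h0, norm_zero] at hk
      nlinarith
    have hder : HasDerivAt (fun y : ℂ => (t : ℂ) + y) 1 w := (hasDerivAt_id w).const_add _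
    have := hder.inv hne
    exact this.congr_deriv (by simp [neg_div, one_div])
  have H := hasDerivAt_integral_of_dominated_loc_of_deriv_le
    (F := fun (w : ℂ) (t : ℝ) => ((t : ℂ) + w)⁻¹)
    (F' := fun (w : ℂ) (t : ℝ) => -(((t : ℂ) + w) ^ 2)⁻¹)
    (bound := fun t : ℝ => c⁻¹ ^ 2 * (1 + t)⁻¹) (Metric.ball_mem_nhds z hε)
    (Filter.Eventually.of_forall hmeas) hF_int hmeas'
    h_bound ((hbase.const_mul (c⁻¹ ^ 2))) h_diff
  exact H.2.differentiableAt

theorem slPsi_analytic_two_cuts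
    (a1p a2p a1m a2m sig2 μ : ℝ)
    (ha1p : 0 ≤ a1p) (ha2p : 0 ≤ a2p) (ha1m : 0 ≤ a1m) (ha2m : 0 ≤ a2m)
    (hsig2 : 0 ≤ sig2)
    (Gp Gm : Measure ℝ)
    (hGpInt : (∫⁻ t : ℝ, ENNReal.ofReal ((1 + t)⁻¹) ∂Gp) < ⊤)
    (hGmInt : (∫⁻ t : ℝ, ENNReal.ofReal ((1 + t)⁻¹) ∂Gm) < ⊤)
    (mP mM : ℝ) (hmP : 0 < mP) (hmM : 0 < mM)
    (hGpSupp : Gp (Set.Iio mP) = 0) (hGmSupp : Gm (Set.Iio mM) = 0) :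
    IsOpen {ξ : ℂ | ¬ ∃ σ : ℝ, (σ ≤ -mP ∨ mM ≤ σ) ∧ ξ = Complex.I * (σ : ℂ)} ∧
    ∀ ξ ∈ {ξ : ℂ | ¬ ∃ σ : ℝ, (σ ≤ -mP ∨ mM ≤ σ) ∧ ξ = Complex.I * (σ : ℂ)},
      DifferentiableAt ℂ (slPsi a1p a2p a1m a2m sig2 μ Gp Gm) ξ := by
  have hset : {ξ : ℂ | ∃ σ : ℝ, (σ ≤ -mP ∨ mM ≤ σ) ∧ ξ = Complex.I * (σ : ℂ)} =
      Complex.re ⁻¹' {0} ∩ Complex.im ⁻¹' (Set.Iic (-mP) ∪ Set.Ici mM) := by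
    ext ξ
    simp only [Set.mem_setOf_eq, Set.mem_inter_iff, Set.mem_preimage, Set.mem_singleton_iff,
      Set.mem_union, Set.mem_Iic, Set.mem_Ici]
    constructor
    · rintro ⟨σ, hσ, rfl⟩
      simp [Complex.mul_re, Complex.mul_im]
      exact hσ
    · rintro ⟨hre, him⟩
      refine ⟨ξ.im, him, ?_⟩
      apply Complex.ext <;> simp [Complex.mul_re, Complex.mul_im, hre]
  constructor
  · have : {ξ : ℂ | ¬ ∃ σ : ℝ, (σ ≤ -mP ∨ mM ≤ σ) ∧ ξ = Complex.I * (σ : ℂ)} =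
        {ξ : ℂ | ∃ σ : ℝ, (σ ≤ -mP ∨ mM ≤ σ) ∧ ξ = Complex.I * (σ : ℂ)}ᶜ := rfl
    rw [this, hset]
    exact ((isClosed_singleton.preimage Complex.continuous_re).inter
      (((isClosed_Iic.union isClosed_Ici).preimage Complex.continuous_im))).isOpen_compl
  · intro ξ hξ
    simp only [Set.mem_setOf_eq] at hξ
    have hp : -Complex.I * ξ ∉ {w : ℂ | w.im = 0 ∧ w.re ≤ -mP} := by
      rintro ⟨him, hre⟩
      simp [Complex.mul_im, Complex.mul_re] at him hre
      exact hξ ⟨ξ.im, Or.inl (by linarith), by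
        apply Complex.ext <;> simp [Complex.mul_re, Complex.mul_im] <;> linarith⟩
    have hmm : Complex.I * ξ ∉ {w : ℂ | w.im = 0 ∧ w.re ≤ -mM} := by
      rintro ⟨him, hre⟩
      simp [Complex.mul_im, Complex.mul_re] at him hre
      exact hξ ⟨ξ.im, Or.inr (by linarith), by
        apply Complex.ext <;> simp [Complex.mul_re, Complex.mul_im] <;> linarith⟩
    have hdp := stieltjesTransform_differentiableAt Gp mP hmP hGpSupp hGpInt _ hp
    have hdm := stieltjesTransform_differentiableAt Gm mM hmM hGmSupp hGmInt _ hmm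
    have h1 : DifferentiableAt ℂ (fun ξ : ℂ => stieltjesTransform Gp (-Complex.I * ξ)) ξ := by
      have hi : DifferentiableAt ℂ (fun ξ : ℂ => -Complex.I * ξ) ξ := by fun_prop
      exact hdp.comp ξ hi
    have h2 : DifferentiableAt ℂ (fun ξ : ℂ => stieltjesTransform Gm (Complex.I * ξ)) ξ := by
      have hi : DifferentiableAt ℂ (fun ξ : ℂ => Complex.I * ξ) ξ := by fun_prop
      exact hdm.comp ξ hi
    have hpoly1 : DifferentiableAt ℂ (fun ξ : ℂ => (a2p : ℂ) * ξ ^ 2 - Complex.I * (a1p : ℂ) * ξ) ξ := by fun_prop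
    have hpoly2 : DifferentiableAt ℂ (fun ξ : ℂ => (a2m : ℂ) * ξ ^ 2 + Complex.I * (a1m : ℂ) * ξ) ξ := by fun_prop
    have hpoly3 : DifferentiableAt ℂ (fun ξ : ℂ => ((sig2 / 2 : ℝ) : ℂ) * ξ ^ 2) ξ := by fun_prop
    have hpoly4 : DifferentiableAt ℂ (fun ξ : ℂ => Complex.I * (μ : ℂ) * ξ) ξ := by fun_prop
    exact (((hpoly1.mul h1).add (hpoly2.mul h2)).add hpoly3).sub hpoly4
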